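/- arXiv:1505.07110 — 3 statements merged into one kernel-verified Lean document; each statement's English description precedes it below -/
import Mathlib

section
/- Let m be a positive integer and q ∈ ℂ with 0 < |q| < 1. If f: ℂ* → ℂ is holomorphic (has no poles) and satisfies f(z) = f(1/z) and f(qz) = q^m z^{2m} f(z) for all z ∈ ℂ*, then f is identically zero. -/
open Complex Set Function

/-- Let `m` be a positive integer and `q ∈ ℂ` with `0 < |q| < 1`.  If `f : ℂ* → ℂ` is
holomorphic (has no poles) and satisfies `f(z) = f(1/z)` and `f(qz) = q^m z^{2m} f(z)`
for all `z ∈ ℂ*`, then `f` is identically zero.  (A holomorphic symmetric section of the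
line bundle `L^{-m}` over the elliptic curve `ℂ*/q^ℤ` vanishes.) -/
theorem holomorphic_section_negative_degree_vanishes (m : ℕ) (hm : 0 < m) (q : ℂ)
    (hq0 : 0 < ‖q‖) (hq1 : ‖q‖ < 1) (f : ℂ → ℂ)
    (hf : DifferentiableOn ℂ f {z : ℂ | z ≠ 0})
    (hsym : ∀ z : ℂ, z ≠ 0 → f z⁻¹ = f z)
    (hqp : ∀ z : ℂ, z ≠ 0 → f (q * z) = q ^ m * z ^ (2 * m) * f z) :
    ∀ z : ℂ, z ≠ 0 → f z = 0 := by
  have hqne : q ≠ 0 := by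
    intro h; simp [h] at hq0
  -- iterated functional equation
  have hA : ∀ n : ℕ, ∀ z : ℂ, z ≠ 0 → f (q ^ n * z) = q ^ (m * n ^ 2) * z ^ (2 * m * n) * f z := by
    intro n
    induction n with
    | zero => intro z hz; simp
    | succ n ih =>
      intro z hz
      have h1 : q ^ (n + 1) * z = q * (q ^ n * z) := by ring
      have h2 : q ^ n * z ≠ 0 := mul_ne_zero (pow_ne_zero _ hqne) hz
      rw [h1, hqp _ h2, ih z hz, mul_pow, ← pow_mul]
      rw [show m * (n + 1) ^ 2 = m * n ^ 2 + (n * (2 * m) + m) by ring,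
        show 2 * m * (n + 1) = 2 * m * n + 2 * m by ring, pow_add, pow_add, pow_add]
      ring
  -- bound on fundamental annulus
  obtain ⟨M, hM⟩ : ∃ M, ∀ w ∈ (Metric.closedBall (0:ℂ) 1 \ Metric.ball (0:ℂ) (‖q‖)), ‖f w‖ ≤ M := by
    have hK : IsCompact (Metric.closedBall (0:ℂ) 1 \ Metric.ball (0:ℂ) (‖q‖)) :=
      (isCompact_closedBall _ _).diff Metric.isOpen_ball
    have hsub : (Metric.closedBall (0:ℂ) 1 \ Metric.ball (0:ℂ) (‖q‖)) ⊆ {z : ℂ | z ≠ 0} := by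
      intro w hw
      have : ‖q‖ ≤ ‖w‖ := by
        simpa [Complex.dist_eq] using hw.2
      intro h0
      rw [h0] at this
      simp at this
      exact hqne this
    exact hK.exists_bound_of_continuousOn ((hf.continuousOn).mono hsub)
  have hM0 : 0 ≤ M := le_trans (norm_nonneg _) (hM 1 (by simp [Complex.dist_eq]; exact hq1.le))
  -- bound for |z| ≤ 1
  have hb1 : ∀ z : ℂ, z ≠ 0 → ‖z‖ ≤ 1 → ‖f z‖ ≤ M := by
    intro z hz hz1
    have hz0 : 0 < ‖z‖ := norm_pos_iff.mpr hz
    obtain ⟨n0, hn0⟩ := exists_pow_lt_of_lt_one hz0 hq1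
    have hex : ∃ n, ‖q‖ ^ (n + 1) < ‖z‖ := by
      refine ⟨n0, lt_of_le_of_lt ?_ hn0⟩
      exact pow_le_pow_of_le_one (norm_nonneg q) hq1.le (Nat.le_succ n0)
    set n := Nat.find hex with hn
    have hn1 : ‖q‖ ^ (n + 1) < ‖z‖ := Nat.find_spec hex
    have hn2 : ‖z‖ ≤ ‖q‖ ^ n := by
      rcases Nat.eq_zero_or_pos n with h0 | hpos
      · rw [h0]; simpa using hz1
      · have hlt : n - 1 < n := Nat.sub_lt hpos one_pos
        have hmin := Nat.find_min hex hlt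
        have h' : n - 1 + 1 = n := Nat.succ_pred_eq_of_pos hpos
        rw [h'] at hmin
        exact le_of_not_gt hmin
    set w : ℂ := z / q ^ n with hw
    have hw0 : w ≠ 0 := div_ne_zero hz (pow_ne_zero _ hqne)
    have hwz : q ^ n * w = z := by rw [hw]; field_simp
    have hwabs : ‖w‖ = ‖z‖ / ‖q‖ ^ n := by
      simp [hw, norm_div, norm_pow]
    have hw1 : ‖w‖ ≤ 1 := by
      rw [hwabs]
      exact div_le_one_of_le₀ hn2 (by positivity)
    have hwq : ‖q‖ ≤ ‖w‖ := by
      rw [hwabs, le_div_iff₀ (by positivity)]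
      calc ‖q‖ * ‖q‖ ^ n = ‖q‖ ^ (n + 1) := by ring
        _ ≤ ‖z‖ := hn1.le
    have hfw : ‖f w‖ ≤ M := hM w (by
      constructor
      · simp only [Metric.mem_closedBall, Complex.dist_eq, sub_zero]
        exact hw1
      · simp only [Metric.mem_ball, Complex.dist_eq, sub_zero, not_lt]
        exact hwq)
    have := hA n w hw0
    rw [hwz] at this
    rw [this]
    have h1 : ‖q ^ (m * n ^ 2)‖ ≤ 1 := by
      rw [norm_pow]; exact pow_le_one₀ (norm_nonneg q) hq1.le
    have h2 : ‖w ^ (2 * m * n)‖ ≤ 1 := by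
      rw [norm_pow]; exact pow_le_one₀ (norm_nonneg w) hw1
    calc ‖q ^ (m * n ^ 2) * w ^ (2 * m * n) * f w‖
        = ‖q ^ (m * n ^ 2)‖ * ‖w ^ (2 * m * n)‖ * ‖f w‖ := by
          simp [norm_mul]
      _ ≤ 1 * 1 * M := by
          gcongr
      _ = M := by ring
  -- bound everywhere
  have hb : ∀ z : ℂ, z ≠ 0 → ‖f z‖ ≤ M := by
    intro z hz
    rcases le_or_gt (‖z‖) 1 with h | h
    · exact hb1 z hz h
    · have hzi : (z⁻¹ : ℂ) ≠ 0 := inv_ne_zero hz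
      rw [← hsym z hz]
      refine hb1 _ hzi ?_
      rw [norm_inv]
      exact inv_le_one_of_one_le₀ h.le
  -- removable singularity: extend to entire function
  set F : ℂ → ℂ := Function.update f 0 (Filter.limUnder (nhdsWithin 0 {z : ℂ | z ≠ 0}) f) with hF
  have hseteq : (Set.univ : Set ℂ) \ {0} = {z : ℂ | z ≠ 0} := by
    ext z; simp
  have hFdiff : Differentiable ℂ F := by
    have h := Complex.differentiableOn_update_limUnder_of_bddAbove (Filter.univ_mem : (Set.univ : Set ℂ) ∈ nhds 0)
      (by rw [hseteq]; exact hf)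
      (by
        rw [hseteq]
        refine ⟨max M 0, ?_⟩
        rintro x ⟨z, hz, rfl⟩
        exact le_max_of_le_left (hb z hz))
    rw [← differentiableOn_univ]
    exact h
  have hFz : ∀ z : ℂ, z ≠ 0 → F z = f z := by
    intro z hz
    simp [hF, Function.update_of_ne hz]
  have hFbd : Bornology.IsBounded (Set.range F) := by
    apply isBounded_iff_forall_norm_le.2
    refine ⟨max M ‖F 0‖, ?_⟩
    rintro x ⟨z, rfl⟩
    by_cases hz : z = 0
    · rw [hz]; exact le_max_right _ _
    · rw [hFz z hz]; exact le_max_of_le_left (hb z hz)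
  have hconst : ∀ z : ℂ, z ≠ 0 → f z = f 1 := by
    intro z hz
    rw [← hFz z hz, ← hFz 1 one_ne_zero]
    exact hFdiff.apply_eq_apply_of_bounded hFbd z 1
  -- conclude
  have h1 : f q = q ^ m * f 1 := by
    have := hqp 1 one_ne_zero
    simpa using this
  rw [hconst q hqne] at h1
  have hqm : q ^ m ≠ 1 := by
    intro h
    have : ‖q ^ m‖ < 1 := by
      rw [norm_pow]
      exact pow_lt_one₀ (norm_nonneg q) hq1 hm.ne'
    rw [h] at this
    simp at this
  have hf1 : f 1 = 0 := by
    have : (1 - q ^ m) * f 1 = 0 := by linear_combination h1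
    rcases mul_eq_zero.1 this with h | h
    · exact absurd (by linear_combination -h : q ^ m = 1) hqm
    · exact h
  intro z hz
  rw [hconst z hz, hf1]
end

section
/- Let q ∈ ℂ with 0 < |q| < 1 and let f, g: ℂ* → ℂ be meromorphic functions both satisfying h(z) = h(1/z) and h(qz) = q^m z^{2m} h(z) for a fixed positive integer m. If f and g have the same poles with the same principal parts (i.e. f − g is holomorphic on ℂ*), then f = g. -/
open Metric Filter Bornology Set

/-- Let `0 < |q| < 1` and let `f, g : ℂ* → ℂ` be meromorphic functions both satisfying
`h(z) = h(1/z)` and `h(qz) = q^m z^{2m} h(z)` for a fixed positive integer `m`.  If `f` and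
`g` have the same poles with the same principal parts, i.e. `f - g` is holomorphic on `ℂ*`,
then `f = g` on `ℂ*`. -/
theorem meromorphic_sections_eq_of_sub_holomorphic (m : ℕ) (hm : 0 < m) (q : ℂ)
    (hq0 : 0 < ‖q‖) (hq1 : ‖q‖ < 1) (f g : ℂ → ℂ)
    (hf : MeromorphicOn f {z : ℂ | z ≠ 0})
    (hg : MeromorphicOn g {z : ℂ | z ≠ 0})
    (hfsym : ∀ z : ℂ, z ≠ 0 → f z⁻¹ = f z)
    (hfqp : ∀ z : ℂ, z ≠ 0 → f (q * z) = q ^ m * z ^ (2 * m) * f z)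
    (hgsym : ∀ z : ℂ, z ≠ 0 → g z⁻¹ = g z)
    (hgqp : ∀ z : ℂ, z ≠ 0 → g (q * z) = q ^ m * z ^ (2 * m) * g z)
    (hdiff : DifferentiableOn ℂ (fun z => f z - g z) {z : ℂ | z ≠ 0}) :
    ∀ z : ℂ, z ≠ 0 → f z = g z := by
  set h : ℂ → ℂ := fun z => f z - g z with hh
  have hq0' : q ≠ 0 := by
    intro hq; rw [hq] at hq0; simp at hq0
  have hnq0 : (0:ℝ) < ‖q‖ := by exact hq0
  have hnq1 : ‖q‖ < 1 := by exact hq1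
  have hqp : ∀ z : ℂ, z ≠ 0 → h (q * z) = q ^ m * z ^ (2 * m) * h z := by
    intro z hz; simp only [hh]; rw [hfqp z hz, hgqp z hz]; ring
  have hsym : ∀ z : ℂ, z ≠ 0 → h z⁻¹ = h z := by
    intro z hz; simp only [hh, hfsym z hz, hgsym z hz]
  -- iterated functional equation
  have hiter : ∀ n : ℕ, ∀ z : ℂ, z ≠ 0 →
      h (q ^ n * z) = q ^ (m * n ^ 2) * z ^ (2 * m * n) * h z := by
    intro n
    induction n with
    | zero => intro z hz; simp
    | succ n ih =>
      intro z hz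
      have hz' : q ^ n * z ≠ 0 := mul_ne_zero (pow_ne_zero _ hq0') hz
      have e1 : q ^ (n + 1) * z = q * (q ^ n * z) := by ring
      rw [e1, hqp _ hz', ih z hz]
      have e2 : m * (n + 1) ^ 2 = m + (2 * m * n + m * n ^ 2) := by ring
      have e3 : 2 * m * (n + 1) = 2 * m + 2 * m * n := by ring
      rw [e2, e3, mul_pow, pow_add, pow_add, pow_add, ← pow_mul]
      ring
  -- bound on the unit circle
  obtain ⟨M, hM⟩ := (isCompact_sphere (0:ℂ) 1).exists_bound_of_continuousOn
    (hdiff.continuousOn.mono (by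
      intro z hz
      simp only [mem_sphere_zero_iff_norm] at hz
      simp only [Set.mem_setOf_eq]
      intro h0; rw [h0] at hz; simp at hz))
  have hM0 : 0 ≤ M := le_trans (norm_nonneg _) (hM 1 (by simp))
  -- bound on the circle of radius ‖q‖^n
  have inner : ∀ n : ℕ, ∀ w : ℂ, ‖w‖ = ‖q‖ ^ n → ‖h w‖ ≤ ‖q‖ ^ (m * n ^ 2) * M := by
    intro n w hw
    have hw0 : w ≠ 0 := by
      intro h0; rw [h0, norm_zero] at hw
      exact absurd hw.symm (ne_of_gt (pow_pos hnq0 n))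
    set z : ℂ := w / q ^ n with hz
    have hzne : z ≠ 0 := div_ne_zero hw0 (pow_ne_zero _ hq0')
    have hzn : ‖z‖ = 1 := by
      rw [hz, norm_div, norm_pow, hw, div_self (ne_of_gt (pow_pos hnq0 n))]
    have hwz : w = q ^ n * z := by
      rw [hz, mul_div_assoc', eq_div_iff (pow_ne_zero _ hq0'), mul_comm]
    rw [hwz, hiter n z hzne]
    rw [norm_mul, norm_mul, norm_pow, norm_pow, hzn, one_pow, mul_one]
    exact mul_le_mul_of_nonneg_left (hM z (by simp [mem_sphere_zero_iff_norm, hzn]))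
      (pow_nonneg (norm_nonneg q) _)
  -- bound on the circle of radius ‖q‖^(-n)
  have outer : ∀ n : ℕ, ∀ w : ℂ, ‖w‖ = (‖q‖ ^ n)⁻¹ → ‖h w‖ ≤ ‖q‖ ^ (m * n ^ 2) * M := by
    intro n w hw
    have hw0 : w ≠ 0 := by
      intro h0; rw [h0, norm_zero] at hw
      exact absurd hw.symm (ne_of_gt (by positivity))
    have : ‖w⁻¹‖ = ‖q‖ ^ n := by rw [norm_inv, hw, inv_inv]
    rw [← hsym w hw0]
    exact inner n w⁻¹ this
  -- max modulus on annuli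
  intro z₀ hz₀
  suffices hsz : ‖h z₀‖ ≤ 0 by
    have : h z₀ = 0 := norm_le_zero_iff.mp hsz
    simpa [hh, sub_eq_zero] using this
  have hz₀n : 0 < ‖z₀‖ := norm_pos_iff.mpr hz₀
  have hbound : ∀ n : ℕ, ‖q‖ ^ n < ‖z₀‖ → ‖z₀‖ < (‖q‖ ^ n)⁻¹ →
      ‖h z₀‖ ≤ ‖q‖ ^ (m * n ^ 2) * M := by
    intro n hn1 hn2
    set r : ℝ := ‖q‖ ^ n with hr
    have hrpos : 0 < r := pow_pos hnq0 n
    set U : Set ℂ := ball (0:ℂ) r⁻¹ \ closedBall 0 r with hU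
    have hclos : closure U ⊆ {z : ℂ | z ≠ 0} := by
      intro z hzc
      have h1 : z ∈ closure (ball (0:ℂ) r⁻¹) ∩ closure ((closedBall (0:ℂ) r)ᶜ) := by
        refine ⟨closure_mono Set.diff_subset hzc, closure_mono ?_ hzc⟩
        intro x hx; exact hx.2
      have h2 : z ∉ interior (closedBall (0:ℂ) r) := by
        have := h1.2
        rw [closure_compl] at this
        exact this
      rw [interior_closedBall _ (ne_of_gt hrpos)] at h2
      simp only [mem_ball_zero_iff, not_lt] at h2
      simp only [Set.mem_setOf_eq]
      intro h0; rw [h0, norm_zero] at h2; exact absurd hrpos (not_lt.mpr h2)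
    have hUopen : IsOpen U := isOpen_ball.sdiff isClosed_closedBall
    have hdU : DiffContOnCl ℂ h U :=
      DifferentiableOn.diffContOnCl (hdiff.mono hclos)
    have hfr : ∀ z ∈ frontier U, ‖h z‖ ≤ ‖q‖ ^ (m * n ^ 2) * M := by
      intro z hzf
      have hzc : z ∈ closure U := frontier_subset_closure hzf
      have hznU : z ∉ U := by
        rw [hUopen.frontier_eq] at hzf; exact hzf.2
      have h1 : ‖z‖ ≤ r⁻¹ := by
        have := closure_mono (Set.diff_subset (t := closedBall (0:ℂ) r)) hzc
        rw [closure_ball _ (ne_of_gt (by positivity : (0:ℝ) < r⁻¹))] at this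
        simpa [mem_closedBall_zero_iff] using this
      have h2 : r ≤ ‖z‖ := by
        have h2' : z ∈ closure ((closedBall (0:ℂ) r)ᶜ) :=
          closure_mono (fun x hx => hx.2) hzc
        rw [closure_compl] at h2'
        rw [interior_closedBall _ (ne_of_gt hrpos)] at h2'
        simpa [mem_ball_zero_iff, not_lt] using h2'
      have hznU' : r⁻¹ ≤ ‖z‖ ∨ ‖z‖ ≤ r := by
        by_contra hcon
        push_neg at hcon
        exact hznU ⟨mem_ball_zero_iff.mpr hcon.1,
          fun hmem => absurd (mem_closedBall_zero_iff.mp hmem) (not_le.mpr hcon.2)⟩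
      rcases hznU' with hc | hc
      · exact outer n z (le_antisymm h1 hc)
      · exact inner n z (le_antisymm hc h2)
    have hzU : z₀ ∈ U := by
      simp only [hU, Set.mem_diff, mem_ball_zero_iff, mem_closedBall_zero_iff, not_le]
      exact ⟨hn2, hn1⟩
    exact Complex.norm_le_of_forall_mem_frontier_norm_le
      (Metric.isBounded_ball.subset Set.diff_subset) hdU hfr (subset_closure hzU)
  -- take the limit n → ∞
  have htend : Tendsto (fun n : ℕ => ‖q‖ ^ (m * n ^ 2) * M) atTop (nhds 0) := by
    have h1 : Tendsto (fun n : ℕ => ‖q‖ ^ n * M) atTop (nhds 0) := by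
      simpa using (tendsto_pow_atTop_nhds_zero_of_lt_one (le_of_lt hnq0) hnq1).mul_const M
    refine squeeze_zero (fun n => by positivity) (fun n => ?_) h1
    refine mul_le_mul_of_nonneg_right ?_ hM0
    refine pow_le_pow_of_le_one (le_of_lt hnq0) (le_of_lt hnq1) ?_
    calc n ≤ n ^ 2 := by nlinarith
    _ ≤ m * n ^ 2 := Nat.le_mul_of_pos_left _ hm
  refine ge_of_tendsto htend ?_
  have hsmall : Tendsto (fun n : ℕ => ‖q‖ ^ n) atTop (nhds 0) :=
    tendsto_pow_atTop_nhds_zero_of_lt_one (le_of_lt hnq0) hnq1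
  have hev : ∀ᶠ n : ℕ in atTop, ‖q‖ ^ n < min ‖z₀‖ ‖z₀‖⁻¹ :=
    hsmall.eventually_lt_const (lt_min hz₀n (by positivity))
  filter_upwards [hev] with n hn
  have h1 : ‖q‖ ^ n < ‖z₀‖ := lt_of_lt_of_le hn (min_le_left _ _)
  have h2 : ‖q‖ ^ n < ‖z₀‖⁻¹ := lt_of_lt_of_le hn (min_le_right _ _)
  have h3 : ‖z₀‖ < (‖q‖ ^ n)⁻¹ := by
    have := (inv_lt_inv₀ (by positivity) (pow_pos hnq0 n)).mpr h2
    rwa [inv_inv] at this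
  exact hbound n h1 h3
end

section
/- Let 0<|q|<1 and define the kernel K(a,ξ;x) := θ(q x^{-2};q) / ∏_{i,j=1,2} θ(x aᵢ/ξⱼ;q) for SU(2) fugacities a=(a₁,a₂)=(a,1/a), ξ=(ξ₁,ξ₂)=(ξ,1/ξ). Then K satisfies the ellipticity condition in ξ: K(a, (qξ, 1/(qξ)); x) = K(a, (ξ,1/ξ); x), when combined with the SU(2) vector multiplet measure factor (q;q)²θ(ξ²;q)θ(ξ^{-2};q); i.e. the integrand I_V(ξ)·K(a,ξ⁻¹;x)·K(ξ,b⁻¹;y) is invariant under ξ ↦ qξ. -/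
/-- The q-Pochhammer symbol `(x;q)_∞ = ∏_{i=0}^∞ (1 - x q^i)`. -/
noncomputable def qPoch (x q : ℂ) : ℂ := ∏' n : ℕ, (1 - x * q ^ n)

/-- The q-theta function `θ(x;q) = (x;q)_∞ (q/x;q)_∞`. -/
noncomputable def qTheta (x q : ℂ) : ℂ := qPoch x q * qPoch (q / x) q

/-- The Landau–Ginzburg block kernel `K(a,ξ;x) = θ(q x⁻²;q)/∏_{i,j} θ(x aᵢ/ξⱼ;q)` with
`SU(2)` fugacities `a = (a, 1/a)`, `ξ = (ξ, 1/ξ)`. -/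
noncomputable def Kblock (q x a ξ : ℂ) : ℂ :=
  qTheta (q / x ^ 2) q /
    (qTheta (x * a / ξ) q * qTheta (x * a * ξ) q *
      qTheta (x / (a * ξ)) q * qTheta (x * ξ / a) q)

/-- The `(0,2)` `SU(2)` vector multiplet index `I_V(ξ) = (q;q)² θ(ξ²;q) θ(ξ⁻²;q)`. -/
noncomputable def IVsu2 (q ξ : ℂ) : ℂ :=
  (qPoch q q) ^ 2 * qTheta (ξ ^ 2) q * qTheta (ξ⁻¹ ^ 2) q


open Filter

lemma mult_aux (x q : ℂ) (hq : ‖q‖ < 1) :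
    Multipliable (fun n : ℕ => 1 - x * q ^ n) := by
  by_cases h : ∀ n : ℕ, 1 - x * q ^ n ≠ 0
  · exact Complex.multipliable_of_summable_log (by
        have hgeo : Summable (fun n : ℕ => (3/2 : ℝ) * (‖x‖ * ‖q‖ ^ n)) :=
          ((summable_geometric_of_lt_one (norm_nonneg q) hq).mul_left _).mul_left _
        apply Summable.of_norm_bounded_eventually_nat hgeo
        have htend : Tendsto (fun n : ℕ => ‖x‖ * ‖q‖ ^ n) atTop (nhds 0) := by
          simpa using (tendsto_pow_atTop_nhds_zero_of_lt_one (norm_nonneg q)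
            hq).const_mul (‖x‖)
        have hev : ∀ᶠ n : ℕ in atTop, ‖x‖ * ‖q‖ ^ n ≤ 1/2 := by
          have := htend.eventually (ge_mem_nhds (by norm_num : (0:ℝ) < 1/2))
          exact this.mono fun n hn => hn
        refine hev.mono fun n hn => ?_
        have h1 : ‖(-(x * q ^ n) : ℂ)‖ ≤ 1/2 := by
          simpa [map_mul, map_pow] using hn
        have := Complex.norm_log_one_add_half_le_self h1
        simpa [sub_eq_add_neg, map_mul, map_pow] using this)
  · push_neg at h
    obtain ⟨n₀, h0⟩ := h
    refine ⟨0, ?_⟩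
    have hev : ∀ᶠ s : Finset ℕ in atTop, ∏ i ∈ s, (1 - x * q ^ i) = 0 := by
      filter_upwards [eventually_ge_atTop ({n₀} : Finset ℕ)] with s hs
      exact Finset.prod_eq_zero (hs (Finset.mem_singleton_self n₀)) h0
    exact Tendsto.congr' (hev.mono fun s hs => hs.symm) tendsto_const_nhds


lemma qPoch_peel (x q : ℂ) (hq : ‖q‖ < 1) :
    qPoch x q = (1 - x) * qPoch (q * x) q := by
  unfold qPoch
  have h : (fun n : ℕ => 1 - x * q ^ (n + 1)) = (fun n : ℕ => 1 - q * x * q ^ n) := by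
    funext n; ring
  rw [tprod_eq_zero_mul' (by rw [h]; exact mult_aux (q * x) q hq)]
  rw [h]; simp

lemma qTheta_shift (x q : ℂ) (hx : x ≠ 0) (hq0 : q ≠ 0) (hq : ‖q‖ < 1) :
    qTheta (q * x) q = -x⁻¹ * qTheta x q := by
  unfold qTheta
  have e1 : q / (q * x) = x⁻¹ := by field_simp
  have e2 : q / x = q * x⁻¹ := by rw [div_eq_mul_inv]
  rw [e1, e2, qPoch_peel x⁻¹ q hq, qPoch_peel x q hq]
  have key : (1 - x⁻¹) = -x⁻¹ * (1 - x) := by field_simp; ring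
  rw [key]; ring

lemma qTheta_shift_down (x q : ℂ) (hx : x ≠ 0) (hq0 : q ≠ 0) (hq : ‖q‖ < 1) :
    qTheta (x / q) q = -(x / q) * qTheta x q := by
  have h := qTheta_shift (x / q) q (div_ne_zero hx hq0) hq0 hq
  rw [show q * (x / q) = x by field_simp] at h
  have hxq : (x / q) ≠ 0 := div_ne_zero hx hq0
  field_simp at h ⊢
  linear_combination h


lemma div_scale (N D c : ℂ) (hc : c ≠ 0) : c * (N / D) = N / (c⁻¹ * D) := by
  rw [div_eq_mul_inv, div_eq_mul_inv, mul_inv, inv_inv]; ring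

section
variable (q x y a b ξ : ℂ) (hq0 : q ≠ 0) (hq : ‖q‖ < 1)
  (hx : x ≠ 0) (hy : y ≠ 0) (ha : a ≠ 0) (hb : b ≠ 0) (hξ : ξ ≠ 0)

include hq0 hq hξ in
lemma IV_scale : IVsu2 q (q * ξ) = (q ^ 4 * ξ ^ 8)⁻¹ * IVsu2 q ξ := by
  unfold IVsu2
  have e1 : (q * ξ) ^ 2 = q * (q * ξ ^ 2) := by ring
  have e2 : ((q * ξ)⁻¹) ^ 2 = (ξ⁻¹ ^ 2 / q) / q := by simp only [div_eq_mul_inv, mul_inv, inv_inv]; ring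
  rw [e1, e2,
      qTheta_shift (q * ξ ^ 2) q (mul_ne_zero hq0 (pow_ne_zero _ hξ)) hq0 hq,
      qTheta_shift (ξ ^ 2) q (pow_ne_zero _ hξ) hq0 hq,
      qTheta_shift_down (ξ⁻¹ ^ 2 / q) q
        (div_ne_zero (pow_ne_zero _ (inv_ne_zero hξ)) hq0) hq0 hq,
      qTheta_shift_down (ξ⁻¹ ^ 2) q (pow_ne_zero _ (inv_ne_zero hξ)) hq0 hq]
  field_simp

include hq0 hq hx ha hξ in
lemma K_scale1 : Kblock q x a (q * ξ)⁻¹ = q ^ 2 * ξ ^ 4 * Kblock q x a ξ⁻¹ := by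
  unfold Kblock
  have hqξ : q * ξ ≠ 0 := mul_ne_zero hq0 hξ
  have e1 : x * a / (q * ξ)⁻¹ = q * (x * a * ξ) := by simp only [div_eq_mul_inv, mul_inv, inv_inv]; ring
  have e2 : x * a * (q * ξ)⁻¹ = (x * a / ξ) / q := by simp only [div_eq_mul_inv, mul_inv, inv_inv]; ring
  have e3 : x / (a * (q * ξ)⁻¹) = q * (x * ξ / a) := by simp only [div_eq_mul_inv, mul_inv, inv_inv]; ring
  have e4 : x * (q * ξ)⁻¹ / a = (x / (a * ξ)) / q := by simp only [div_eq_mul_inv, mul_inv, inv_inv]; ring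
  have e5 : x * a / ξ⁻¹ = x * a * ξ := by simp only [div_eq_mul_inv, inv_inv]
  have e6 : x * a * ξ⁻¹ = x * a / ξ := by rw [div_eq_mul_inv]
  have e7 : x / (a * ξ⁻¹) = x * ξ / a := by simp only [div_eq_mul_inv, mul_inv, inv_inv]; ring
  have e8 : x * ξ⁻¹ / a = x / (a * ξ) := by simp only [div_eq_mul_inv, mul_inv, inv_inv]; ring
  rw [e1, e2, e3, e4, e5, e6, e7, e8,
      qTheta_shift (x * a * ξ) q (mul_ne_zero (mul_ne_zero hx ha) hξ) hq0 hq,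
      qTheta_shift (x * ξ / a) q (div_ne_zero (mul_ne_zero hx hξ) ha) hq0 hq,
      qTheta_shift_down (x * a / ξ) q (div_ne_zero (mul_ne_zero hx ha) hξ) hq0 hq,
      qTheta_shift_down (x / (a * ξ)) q (div_ne_zero hx (mul_ne_zero ha hξ)) hq0 hq,
      div_scale _ _ (q ^ 2 * ξ ^ 4) (mul_ne_zero (pow_ne_zero _ hq0) (pow_ne_zero _ hξ))]
  congr 1
  field_simp

include hq0 hq hy hb hξ in
lemma K_scale2 : Kblock q y (q * ξ) b⁻¹ = q ^ 2 * ξ ^ 4 * Kblock q y ξ b⁻¹ := by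
  unfold Kblock
  have e1 : y * (q * ξ) / b⁻¹ = q * (y * ξ * b) := by simp only [div_eq_mul_inv, mul_inv, inv_inv]; ring
  have e2 : y * (q * ξ) * b⁻¹ = q * (y * ξ / b) := by simp only [div_eq_mul_inv, mul_inv, inv_inv]; ring
  have e3 : y / (q * ξ * b⁻¹) = (y * b / ξ) / q := by simp only [div_eq_mul_inv, mul_inv, inv_inv]; ring
  have e4 : y * b⁻¹ / (q * ξ) = (y / (b * ξ)) / q := by simp only [div_eq_mul_inv, mul_inv, inv_inv]; ring
  have e5 : y * ξ / b⁻¹ = y * ξ * b := by simp only [div_eq_mul_inv, inv_inv]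
  have e6 : y * ξ * b⁻¹ = y * ξ / b := by rw [div_eq_mul_inv]
  have e7 : y / (ξ * b⁻¹) = y * b / ξ := by simp only [div_eq_mul_inv, mul_inv, inv_inv]; ring
  have e8 : y * b⁻¹ / ξ = y / (b * ξ) := by simp only [div_eq_mul_inv, mul_inv, inv_inv]; ring
  rw [e1, e2, e3, e4, e5, e6, e7, e8,
      qTheta_shift (y * ξ * b) q (mul_ne_zero (mul_ne_zero hy hξ) hb) hq0 hq,
      qTheta_shift (y * ξ / b) q (div_ne_zero (mul_ne_zero hy hξ) hb) hq0 hq,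
      qTheta_shift_down (y * b / ξ) q (div_ne_zero (mul_ne_zero hy hb) hξ) hq0 hq,
      qTheta_shift_down (y / (b * ξ)) q (div_ne_zero hy (mul_ne_zero hb hξ)) hq0 hq,
      div_scale _ _ (q ^ 2 * ξ ^ 4) (mul_ne_zero (pow_ne_zero _ hq0) (pow_ne_zero _ hξ))]
  congr 1
  field_simp

end


/-- Ellipticity of the gauge-fugacity integrand: the combination
`I_V(ξ)·K(a,ξ⁻¹;x)·K(ξ,b⁻¹;y)` is invariant under `ξ ↦ qξ` (this expresses the
cancellation of the `SU(2)` gauge anomaly and makes the Jeffrey–Kirwan contour integral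
well-defined on the elliptic curve `ℂ*/q^ℤ`). -/
theorem integrand_elliptic (q x y a b ξ : ℂ)
    (hq0 : 0 < ‖q‖) (hq1 : ‖q‖ < 1)
    (hx : x ≠ 0) (hy : y ≠ 0) (ha : a ≠ 0) (hb : b ≠ 0) (hξ : ξ ≠ 0) :
    IVsu2 q (q * ξ) * Kblock q x a (q * ξ)⁻¹ * Kblock q y (q * ξ) b⁻¹
      = IVsu2 q ξ * Kblock q x a ξ⁻¹ * Kblock q y ξ b⁻¹ := by
  have hq : q ≠ 0 := by
    intro h; rw [h] at hq0; simp at hq0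
  rw [IV_scale q ξ hq hq1 hξ, K_scale1 q x a ξ hq hq1 hx ha hξ,
      K_scale2 q y b ξ hq hq1 hy hb hξ]
  field_simp
end
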